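/- Let R be a commutative ring and consider a commutative square of cochain complexes of R-modules, i.e. chain maps α : M₀₀ → M₀₁, β : M₀₀ → M₁₀, γ : M₁₀ → M₁₁, δ : M₀₁ → M₁₁ with δ∘α = γ∘β, viewed as a 2-cube M : I² → Ch(R) with M(ε₁,ε₂) = M_{ε₁ε₂}, β and γ the maps in the first coordinate and α and δ the maps in the second coordinate (so C₂M = cone of the induced map cone(β) → cone(δ)). Suppose there exists a chain map s : M₁₁ → M₁₀ such that γ∘s = id_{M₁₁} and such that the map β ⊕ s : M₀₀ ⊕ M₁₁ → M₁₀ (given by β on the first summand and s on the second) is a quasi-isomorphism. Then the total cofiber C₂M is quasi-isomorphic to the suspension M₀₁⟦1⟧. (This is the chain-complex analogue of the paper's Lemma 6.1, stated there for diagrams of symmetric spectra.) -/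

import Mathlib

open CategoryTheory CategoryTheory.Limits CochainComplex

/-- The category `Ch(R)` of cochain complexes of `R`-modules. -/
abbrev Ch (R : Type) [CommRing R] := CochainComplex (ModuleCat R) ℤ

/-- The total cofiber `C₂M` of a commutative square `M` of cochain complexes, with `β, γ`
the maps in the first coordinate and `α, δ` the maps in the second coordinate: the mapping
cone of the induced map `cone(β) → cone(δ)`. -/
noncomputable def totalCofiberSq {R : Type} [CommRing R] {M₀₀ M₁₀ M₀₁ M₁₁ : Ch R}
    (α : M₀₀ ⟶ M₀₁) (β : M₀₀ ⟶ M₁₀) (γ : M₁₀ ⟶ M₁₁) (δ : M₀₁ ⟶ M₁₁)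
    (comm : β ≫ γ = α ≫ δ) : Ch R :=
  mappingCone (mappingCone.map β δ α γ comm)

open Pretriangulated in
/-- If the two vertical maps of a commutative square of cochain complexes are
quasi-isomorphisms, then so is the induced map on mapping cones. -/
lemma quasiIso_mappingCone_map {R : Type} [CommRing R] {K₁ L₁ K₂ L₂ : Ch R}
    (φ₁ : K₁ ⟶ L₁) (φ₂ : K₂ ⟶ L₂) (a : K₁ ⟶ K₂) (b : L₁ ⟶ L₂)
    (comm : φ₁ ≫ b = a ≫ φ₂) [QuasiIso a] [QuasiIso b] :
    QuasiIso (mappingCone.map φ₁ φ₂ a b comm) := by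
  letI := HasDerivedCategory.standard (ModuleCat R)
  have h₁ : DerivedCategory.Q.mapTriangle.obj (mappingCone.triangle φ₁) ∈
      distTriang (DerivedCategory (ModuleCat R)) :=
    (DerivedCategory.mem_distTriang_iff _).2 ⟨_, _, φ₁, ⟨Iso.refl _⟩⟩
  have h₂ : DerivedCategory.Q.mapTriangle.obj (mappingCone.triangle φ₂) ∈
      distTriang (DerivedCategory (ModuleCat R)) :=
    (DerivedCategory.mem_distTriang_iff _).2 ⟨_, _, φ₂, ⟨Iso.refl _⟩⟩
  have h3 : IsIso ((DerivedCategory.Q.mapTriangle.map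
      (mappingCone.triangleMap φ₁ φ₂ a b comm)).hom₃) := by
    apply isIso₃_of_isIso₁₂ _ h₁ h₂
    · try dsimp
      exact (inferInstance : IsIso (DerivedCategory.Q.map a))
    · try dsimp
      exact (inferInstance : IsIso (DerivedCategory.Q.map b))
  try dsimp at h3
  rw [← HomologicalComplex.mem_quasiIso_iff]
  exact (HomologicalComplexUpToQuasiIso.isIso_Q_map_iff_mem_quasiIso _).1 h3

/-- given a commutative square `M` of cochain complexes of `R`-modules as
above, if there is a chain map `s : M₁₁ → M₁₀` with `γ ∘ s = id` and such that
`β ⊕ s : M₀₀ ⊕ M₁₁ → M₁₀` is a quasi-isomorphism, then the total cofiber `C₂M` is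
quasi-isomorphic to the suspension `M₀₁⟦1⟧`. -/
theorem stmt_1 {R : Type} [CommRing R] {M₀₀ M₁₀ M₀₁ M₁₁ : Ch R}
    (α : M₀₀ ⟶ M₀₁) (β : M₀₀ ⟶ M₁₀) (γ : M₁₀ ⟶ M₁₁) (δ : M₀₁ ⟶ M₁₁)
    (comm : β ≫ γ = α ≫ δ)
    (s : M₁₁ ⟶ M₁₀) (hsγ : s ≫ γ = 𝟙 M₁₁)
    (hqi : QuasiIso (biprod.desc β s : M₀₀ ⊞ M₁₁ ⟶ M₁₀)) :
    ∃ (Z : Ch R) (φ : Z ⟶ totalCofiberSq α β γ δ comm) (ψ : Z ⟶ M₀₁⟦(1 : ℤ)⟧),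
      QuasiIso φ ∧ QuasiIso ψ := by
  have hiu : (biprod.inl : M₀₀ ⟶ M₀₀ ⊞ M₁₁) ≫ biprod.desc β s = 𝟙 M₀₀ ≫ β := by simp
  have hg : biprod.desc β s ≫ γ = biprod.desc (α ≫ δ) (𝟙 M₁₁) := by
    apply biprod.hom_ext' <;> simp [comm, hsγ]
  have commZ : (biprod.inl : M₀₀ ⟶ M₀₀ ⊞ M₁₁) ≫ biprod.desc (α ≫ δ) (𝟙 M₁₁) = α ≫ δ := by
    simp
  -- the inclusion `j : M₁₁ ⟶ mappingCone biprod.inl` is a quasi-isomorphism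
  have hS : (ShortComplex.mk (biprod.inl : M₀₀ ⟶ M₀₀ ⊞ M₁₁) (biprod.snd : M₀₀ ⊞ M₁₁ ⟶ M₁₁)
      biprod.inl_snd).ShortExact :=
    (ShortComplex.Splitting.ofHasBinaryBiproduct M₀₀ M₁₁).shortExact
  have hq := mappingCone.quasiIso_descShortComplex hS
  have hjq : (biprod.inr ≫ mappingCone.inr (biprod.inl : M₀₀ ⟶ M₀₀ ⊞ M₁₁)) ≫
      mappingCone.descShortComplex (ShortComplex.mk (biprod.inl : M₀₀ ⟶ M₀₀ ⊞ M₁₁) (biprod.snd : M₀₀ ⊞ M₁₁ ⟶ M₁₁) biprod.inl_snd) = 𝟙 M₁₁ := by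
    have h0 : mappingCone.inr (biprod.inl : M₀₀ ⟶ M₀₀ ⊞ M₁₁) ≫
        mappingCone.descShortComplex (ShortComplex.mk (biprod.inl : M₀₀ ⟶ M₀₀ ⊞ M₁₁)
          (biprod.snd : M₀₀ ⊞ M₁₁ ⟶ M₁₁) biprod.inl_snd) = (biprod.snd : M₀₀ ⊞ M₁₁ ⟶ M₁₁) :=
      mappingCone.inr_descShortComplex _
    rw [Category.assoc, h0, biprod.inr_snd]
  have hj : QuasiIso (biprod.inr ≫ mappingCone.inr (biprod.inl : M₀₀ ⟶ M₀₀ ⊞ M₁₁)) := by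
    have : QuasiIso ((biprod.inr ≫ mappingCone.inr (biprod.inl : M₀₀ ⟶ M₀₀ ⊞ M₁₁)) ≫
        mappingCone.descShortComplex (ShortComplex.mk (biprod.inl : M₀₀ ⟶ M₀₀ ⊞ M₁₁) (biprod.snd : M₀₀ ⊞ M₁₁ ⟶ M₁₁) biprod.inl_snd)) := by
      rw [hjq]; infer_instance
    exact quasiIso_of_comp_right _ (mappingCone.descShortComplex (ShortComplex.mk (biprod.inl : M₀₀ ⟶ M₀₀ ⊞ M₁₁) (biprod.snd : M₀₀ ⊞ M₁₁ ⟶ M₁₁) biprod.inl_snd))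
  -- first quasi-isomorphism: cone(inr δ) ⟶ cone(cone i → cone δ)
  have comm1 : mappingCone.inr δ ≫ 𝟙 (mappingCone δ) =
      (biprod.inr ≫ mappingCone.inr (biprod.inl : M₀₀ ⟶ M₀₀ ⊞ M₁₁)) ≫
        mappingCone.map _ δ α (biprod.desc (α ≫ δ) (𝟙 M₁₁)) commZ := by
    have h := (mappingCone.triangleMap (biprod.inl : M₀₀ ⟶ M₀₀ ⊞ M₁₁) δ α
      (biprod.desc (α ≫ δ) (𝟙 M₁₁)) commZ).comm₂
    try dsimp at h
    simp only [mappingCone.triangle_mor₂, mappingCone.triangleMap_hom₃, mappingCone.triangle_obj₂] at h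
    change _ = biprod.desc (α ≫ δ) (𝟙 M₁₁) ≫ mappingCone.inr δ at h
    rw [Category.comp_id, Category.assoc]; erw [h]; rw [biprod.inr_desc_assoc, Category.id_comp]
  have hqφ₁ : QuasiIso (mappingCone.map _ _
      (biprod.inr ≫ mappingCone.inr (biprod.inl : M₀₀ ⟶ M₀₀ ⊞ M₁₁)) (𝟙 _) comm1) :=
    quasiIso_mappingCone_map _ _ _ _ _
  -- second quasi-isomorphism: cone(cone i → cone δ) ⟶ cone(cone β → cone δ)
  have hqu : QuasiIso (mappingCone.map _ β (𝟙 M₀₀) (biprod.desc β s) hiu) :=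
    quasiIso_mappingCone_map _ _ _ _ _
  have comm2 : mappingCone.map _ δ α (biprod.desc (α ≫ δ) (𝟙 M₁₁)) commZ ≫
      𝟙 (mappingCone δ) =
      mappingCone.map _ β (𝟙 M₀₀) (biprod.desc β s) hiu ≫ mappingCone.map β δ α γ comm := by
    rw [Category.comp_id, ← mappingCone.map_comp]
    simp [hg]
  have hqφ₂ : QuasiIso (mappingCone.map _ _
      (mappingCone.map _ β (𝟙 M₀₀) (biprod.desc β s) hiu) (𝟙 _) comm2 :
      _ ⟶ totalCofiberSq α β γ δ comm) :=
    quasiIso_mappingCone_map _ _ _ _ _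
  exact ⟨mappingCone (mappingCone.inr δ),
    mappingCone.map _ _ (biprod.inr ≫ mappingCone.inr _) (𝟙 _) comm1 ≫
      mappingCone.map _ _ (mappingCone.map _ β (𝟙 M₀₀) (biprod.desc β s) hiu) (𝟙 _) comm2,
    (mappingCone.rotateHomotopyEquiv δ).symm.hom, quasiIso_comp (hφ := hqφ₁) (hφ' := hqφ₂), inferInstance⟩
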